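/- arXiv:2605.12921 — 3 statements merged into one kernel-verified Lean document; each statement's English description precedes it below -/
import Mathlib

section
/- Let G be the group with presentation ⟨a₁, a₂ | a₁³a₂⁴, (a₁⁻¹a₂⁻¹)², ((a₂a₁)¹²a₁⁻³)²⟩, and set μ = a₁⁻¹a₂⁻¹ and λ = (a₂a₁)¹²a₁⁻³ in G. Then μ has order 2, λ has order 2, and μλ has order 2 in G; in particular the natural map C₂ × C₂ → G sending the generators to μ and λ is injective. -/
set_option maxRecDepth 10000

/-- Relators for the group ⟨a₁, a₂ | a₁³a₂⁴, (a₁⁻¹a₂⁻¹)², ((a₂a₁)¹²a₁⁻³)²⟩. -/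
def t34Rels : Set (FreeGroup (Fin 2)) :=
  {(FreeGroup.of 0) ^ 3 * (FreeGroup.of 1) ^ 4,
   ((FreeGroup.of 0)⁻¹ * (FreeGroup.of 1)⁻¹) ^ 2,
   ((FreeGroup.of 1 * FreeGroup.of 0) ^ 12 * ((FreeGroup.of 0)⁻¹) ^ 3) ^ 2}

/-- A concrete permutation realizing the image of a₁ in a finite quotient. -/
def t34px : Equiv.Perm (Fin 8) := ⟨![1,0,3,4,5,6,7,2], ![1,0,7,2,3,4,5,6], by decide, by decide⟩

/-- A concrete permutation realizing the image of a₂ in a finite quotient. -/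
def t34py : Equiv.Perm (Fin 8) := ⟨![5,2,4,0,3,7,1,6], ![3,6,1,4,2,0,7,5], by decide, by decide⟩

def t34f : Fin 2 → Equiv.Perm (Fin 8) := fun i => if i = 0 then t34px else t34py

lemma t34f_rels : ∀ r ∈ t34Rels, FreeGroup.lift t34f r = 1 := by
  intro r hr
  have h0 : FreeGroup.lift t34f (FreeGroup.of (0 : Fin 2)) = t34px := by
    simp [t34f]
  have h1 : FreeGroup.lift t34f (FreeGroup.of (1 : Fin 2)) = t34py := by
    simp [t34f]
  simp only [t34Rels, Set.mem_insert_iff, Set.mem_singleton_iff] at hr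
  rcases hr with rfl | rfl | rfl <;>
    simp only [map_mul, map_pow, map_inv, h0, h1] <;> decide

/-- The homomorphism to the finite quotient. -/
def t34φ : PresentedGroup t34Rels →* Equiv.Perm (Fin 8) := PresentedGroup.toGroup t34f_rels

lemma t34rel_one : ∀ r ∈ t34Rels, PresentedGroup.mk t34Rels r = 1 := fun r hr =>
  (QuotientGroup.eq_one_iff r).mpr (Subgroup.subset_normalClosure hr)

/-- In G = ⟨a₁, a₂ | a₁³a₂⁴, (a₁⁻¹a₂⁻¹)², ((a₂a₁)¹²a₁⁻³)²⟩, the meridian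
μ = a₁⁻¹a₂⁻¹, the longitude λ = (a₂a₁)¹²a₁⁻³ and their product all have order 2;
in particular the natural map C₂ × C₂ → G, (m,n) ↦ μᵐλⁿ, is injective. -/
theorem t34_C2xC2_injective :
    let μ : PresentedGroup t34Rels := (PresentedGroup.of 0)⁻¹ * (PresentedGroup.of 1)⁻¹
    let lam : PresentedGroup t34Rels :=
      (PresentedGroup.of 1 * PresentedGroup.of 0) ^ 12 * ((PresentedGroup.of 0)⁻¹) ^ 3
    orderOf μ = 2 ∧ orderOf lam = 2 ∧ orderOf (μ * lam) = 2 ∧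
      Function.Injective (fun p : ZMod 2 × ZMod 2 => μ ^ p.1.val * lam ^ p.2.val) := by
  intro μ lam
  set a : PresentedGroup t34Rels := PresentedGroup.of 0 with ha
  set b : PresentedGroup t34Rels := PresentedGroup.of 1 with hb
  -- the three relators are trivial
  have h1 : a ^ 3 * b ^ 4 = 1 := by
    have := t34rel_one _ (Set.mem_insert _ _)
    simp only [map_mul, map_pow] at this; exact this
  have h2 : μ ^ 2 = 1 := by
    have := t34rel_one (((FreeGroup.of 0)⁻¹ * (FreeGroup.of 1)⁻¹) ^ 2)
      (by simp [t34Rels])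
    simp only [map_mul, map_pow, map_inv] at this; exact this
  have h3 : lam ^ 2 = 1 := by
    have := t34rel_one (((FreeGroup.of 1 * FreeGroup.of 0) ^ 12 * ((FreeGroup.of 0)⁻¹) ^ 3) ^ 2)
      (by simp [t34Rels])
    simp only [map_mul, map_pow, map_inv] at this; exact this
  -- lam = a⁻³ = b⁴
  have hμinv : μ⁻¹ = b * a := by simp [μ, mul_inv_rev]; rfl
  have hlam : lam = (a⁻¹) ^ 3 := by
    have h12 : (b * a) ^ 12 = (μ ^ 2)⁻¹ ^ 6 := by
      rw [← hμinv]; group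
    show (b * a) ^ 12 * (a⁻¹) ^ 3 = (a⁻¹) ^ 3
    rw [h12, h2]; group
  have hb4 : (a⁻¹) ^ 3 = b ^ 4 := by
    rw [inv_pow, eq_inv_of_mul_eq_one_left h1, inv_inv]
  -- lam commutes with μ
  have hca : Commute lam a := by
    rw [hlam]; exact ((Commute.refl a).inv_left).pow_left 3
  have hcb : Commute lam b := by
    rw [hlam, hb4]; exact (Commute.refl b).pow_left 4
  have hcomm : Commute μ lam := ((hca.inv_right.mul_right hcb.inv_right)).symm
  have h4 : (μ * lam) ^ 2 = 1 := by
    rw [hcomm.mul_pow, h2, h3, one_mul]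
  -- nontriviality via the finite quotient
  have hφa : t34φ a = t34px := by
    simp [t34φ, ha, t34f]
  have hφb : t34φ b = t34py := by
    simp [t34φ, hb, t34f]
  have hφμ : t34φ μ = t34px⁻¹ * t34py⁻¹ := by
    simp [μ, hφa, hφb]; rw [← hφa, ← hφb]
  have hφlam : t34φ lam = (t34py * t34px) ^ 12 * (t34px⁻¹) ^ 3 := by
    simp only [lam, map_mul, map_pow, map_inv, hφa, hφb]; rw [← hφa, ← hφb]
  have hμ1 : μ ≠ 1 := by
    intro h
    have : t34φ μ = 1 := by rw [h, map_one]
    rw [hφμ] at this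
    exact (by decide : t34px⁻¹ * t34py⁻¹ ≠ 1) this
  have hl1 : lam ≠ 1 := by
    intro h
    have : t34φ lam = 1 := by rw [h, map_one]
    rw [hφlam] at this
    exact (by decide : (t34py * t34px) ^ 12 * (t34px⁻¹) ^ 3 ≠ 1) this
  have hml1 : μ * lam ≠ 1 := by
    intro h
    have : t34φ (μ * lam) = 1 := by rw [h, map_one]
    rw [map_mul, hφμ, hφlam] at this
    exact (by decide :
      t34px⁻¹ * t34py⁻¹ * ((t34py * t34px) ^ 12 * (t34px⁻¹) ^ 3) ≠ 1) this
  refine ⟨orderOf_eq_prime h2 hμ1, orderOf_eq_prime h3 hl1, orderOf_eq_prime h4 hml1, ?_⟩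
  -- injectivity
  have hne : μ ≠ lam := by
    intro h
    apply hml1
    rw [← h, ← pow_two, h2]
  have hne2 : μ ≠ μ * lam := by
    intro h
    apply hl1
    exact (left_eq_mul.mp h)
  have hne3 : lam ≠ μ * lam := by
    intro h
    apply hμ1
    exact (right_eq_mul.mp h)
  have hne1s : (1 : PresentedGroup t34Rels) ≠ μ := hμ1.symm
  have hne1l : (1 : PresentedGroup t34Rels) ≠ lam := hl1.symm
  have hne1ml : (1 : PresentedGroup t34Rels) ≠ μ * lam := hml1.symm
  have hnes := hne.symm
  have hne2s := hne2.symm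
  have hne3s := hne3.symm
  intro p q hpq
  obtain ⟨p1, p2⟩ := p
  obtain ⟨q1, q2⟩ := q
  fin_cases p1 <;> fin_cases p2 <;> fin_cases q1 <;> fin_cases q2 <;>
    revert hpq <;>
    simp only [ZMod.val_zero, ZMod.val_one, pow_zero, pow_one, one_mul, mul_one] <;>
    intro hpq <;>
    first
      | rfl
      | exact absurd hpq (by assumption)
      | trivial
end

section
/- Let H, G₁, G₂ be groups, Hᵢ ≤ Gᵢ subgroups, and fᵢ : H → Hᵢ injective homomorphisms for i = 1, 2. Then the induced map H₁ ∗_H H₂ → G₁ ∗_H G₂ between amalgamated free products is injective. -/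
universe u

open Monoid Subgroup Function Monoid.PushoutI Monoid.PushoutI.NormalWord

namespace PushoutSubgroupsAux

/-- A right transversal extending a given partial set of coset representatives. -/
lemma exists_right_transversal_sup {Γ : Type*} [Group Γ] (R : Subgroup Γ) (S : Set Γ)
    (hS : ∀ a ∈ S, ∀ b ∈ S, a * b⁻¹ ∈ R → a = b) :
    ∃ T : Set Γ, Subgroup.IsComplement (R : Set Γ) T ∧ S ⊆ T := by
  classical
  let rep : Quotient (QuotientGroup.rightRel R) → Γ := fun q =>
    if h : ∃ a ∈ S, Quotient.mk'' a = q then h.choose else Quotient.out q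
  have hrep : ∀ q, Quotient.mk'' (rep q) = q := by
    intro q
    simp only [rep]
    split_ifs with h
    · exact h.choose_spec.2
    · exact Quotient.out_eq' q
  refine ⟨Set.range rep, Subgroup.isComplement_range_right hrep, ?_⟩
  intro a ha
  have hex : ∃ x ∈ S, (Quotient.mk'' x : Quotient (QuotientGroup.rightRel R)) =
      Quotient.mk'' a := ⟨a, ha, rfl⟩
  refine ⟨Quotient.mk'' a, ?_⟩
  show (if h : _ then _ else _) = a
  rw [dif_pos hex]
  refine hS _ hex.choose_spec.1 _ ha ?_
  have h2 := hex.choose_spec.2.symm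
  rw [Quotient.eq''] at h2
  exact QuotientGroup.rightRel_apply.1 h2

variable {ι : Type*} {H : Type*} {G : ι → Type*} [Group H] [∀ i, Group (G i)]
  {H' : ∀ i, Subgroup (G i)} {f : ∀ i, H →* (H' i)}

/-- The map on normal words induced by the inclusions `H' i ↪ G i`. -/
def mapW (d : Transversal f) (d' : Transversal (fun i => ((H' i).subtype).comp (f i)))
    (hset : ∀ i, Subtype.val '' d.set i ⊆ d'.set i) (w : NormalWord d) : NormalWord d' where
  toList := w.toList.map fun l => ⟨l.1, (l.2 : G l.1)⟩
  ne_one := by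
    rintro l hl
    rw [List.mem_map] at hl
    obtain ⟨l', hl', rfl⟩ := hl
    intro h1
    refine w.ne_one l' hl' (Subtype.coe_injective ?_)
    show ((l'.2 : H' l'.1) : G l'.1) = ((1 : H' l'.1) : G l'.1)
    rw [OneMemClass.coe_one]
    exact h1
  chain_ne := by
    have := w.chain_ne
    rw [List.isChain_map]
    exact this
  head := w.head
  normalized := by
    rintro i g hg
    rw [List.mem_map] at hg
    obtain ⟨⟨j, x⟩, hx, h⟩ := hg
    obtain ⟨rfl, h2⟩ : j = i ∧ HEq (x : G j) g := Sigma.ext_iff.1 h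
    obtain rfl : (x : G j) = g := eq_of_heq h2
    exact hset j ⟨x, w.normalized j x hx, rfl⟩

lemma mapW_injective (d : Transversal f) (d' : Transversal (fun i => ((H' i).subtype).comp (f i)))
    (hset : ∀ i, Subtype.val '' d.set i ⊆ d'.set i) :
    Function.Injective (mapW d d' hset) := by
  intro w₁ w₂ h
  have hh : w₁.head = w₂.head := congrArg (fun w : NormalWord d' => w.head) h
  have hl : w₁.toList.map (fun l => (⟨l.1, (l.2 : G l.1)⟩ : Σ i, G i)) =
      w₂.toList.map (fun l => ⟨l.1, (l.2 : G l.1)⟩) :=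
    congrArg (fun w : NormalWord d' => w.toList) h
  have hinj : Function.Injective (fun l : Σ i, (H' i) => (⟨l.1, (l.2 : G l.1)⟩ : Σ i, G i)) := by
    rintro ⟨i, a⟩ ⟨j, b⟩ hab
    obtain ⟨rfl, h2⟩ : i = j ∧ HEq (a : G i) (b : G j) := Sigma.ext_iff.1 hab
    have h3 : (a : G i) = b := eq_of_heq h2
    simp [Subtype.ext_iff, h3]
  exact NormalWord.ext hh (List.map_injective_iff.2 hinj hl)

/-- The induced map on pushouts. -/
noncomputable def indMap (f : ∀ i, H →* (H' i)) :
    PushoutI f →* PushoutI (fun i => ((H' i).subtype).comp (f i)) :=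
  PushoutI.lift (fun i => (PushoutI.of i).comp (H' i).subtype)
    (PushoutI.base (fun i => ((H' i).subtype).comp (f i)))
    (fun i => by rw [MonoidHom.comp_assoc]; exact of_comp_eq_base i)

lemma indMap_of {i : ι} (x : H' i) :
    indMap f (PushoutI.of (φ := f) i x) =
      PushoutI.of (φ := fun i => ((H' i).subtype).comp (f i)) i (x : G i) := by
  simp [indMap]

lemma indMap_base (h : H) :
    indMap f (PushoutI.base f h) =
      PushoutI.base (fun i => ((H' i).subtype).comp (f i)) h := by
  simp [indMap]

lemma mapW_prod (d : Transversal f) (d' : Transversal (fun i => ((H' i).subtype).comp (f i)))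
    (hset : ∀ i, Subtype.val '' d.set i ⊆ d'.set i) (w : NormalWord d) :
    (mapW d d' hset w).prod = indMap f w.prod := by
  rw [NormalWord.prod, NormalWord.prod, map_mul, indMap_base]
  congr 1
  show ofCoprodI (φ := fun i => ((H' i).subtype).comp (f i)) ((mapW d d' hset w).toWord.prod) =
    indMap f (ofCoprodI (φ := f) (w.toWord.prod))
  have hlist : (mapW d d' hset w).toList = w.toList.map fun l => ⟨l.1, (l.2 : G l.1)⟩ := rfl
  rw [← MonoidHom.comp_apply, CoprodI.Word.prod, CoprodI.Word.prod,
    MonoidHom.map_list_prod, MonoidHom.map_list_prod, hlist]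
  simp only [List.map_map]
  refine congrArg List.prod (List.map_congr_left ?_)
  intro l _
  simp only [Function.comp_apply, MonoidHom.coe_comp, ofCoprodI_of]
  exact (indMap_of l.2).symm

end PushoutSubgroupsAux

open PushoutSubgroupsAux

/-- If `H₁ ≤ G₁`, `H₂ ≤ G₂` are subgroups and `fᵢ : H → Hᵢ` are injective homomorphisms,
then the induced map `H₁ ∗_H H₂ → G₁ ∗_H G₂` of amalgamated free products is injective. -/
theorem pushout_subgroups_injective {H : Type u} {G : Bool → Type u}
    [Group H] [∀ b, Group (G b)]
    (H' : ∀ b, Subgroup (G b)) (f : ∀ b, H →* (H' b))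
    (hf : ∀ b, Function.Injective (f b)) :
    ∃ F : Monoid.PushoutI f →* Monoid.PushoutI (fun b => ((H' b).subtype).comp (f b)),
      (∀ (b : Bool) (x : H' b),
        F (Monoid.PushoutI.of (φ := f) b x) =
          Monoid.PushoutI.of (φ := fun b => ((H' b).subtype).comp (f b)) b (x : G b)) ∧
      Function.Injective F := by
  classical
  refine ⟨indMap f, fun b x => indMap_of x, ?_⟩
  obtain ⟨d⟩ := transversal_nonempty f hf
  have hT : ∀ b, ∃ T : Set (G b),
      Subgroup.IsComplement (((((H' b).subtype).comp (f b)).range : Subgroup (G b)) : Set (G b)) T ∧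
      (Subtype.val '' d.set b) ⊆ T := by
    intro b
    apply exists_right_transversal_sup
    rintro _ ⟨a, ha, rfl⟩ _ ⟨c, hc, rfl⟩ hR
    obtain ⟨h, hh⟩ := hR
    have hac : f b h = a * c⁻¹ := by
      apply Subtype.coe_injective
      show ((f b h : H' b) : G b) = ((a * c⁻¹ : H' b) : G b)
      push_cast
      exact hh
    have m1 : f b h ∈ (((f b).range : Subgroup (H' b)) : Set (H' b)) := ⟨h, rfl⟩
    have m0 : (1 : H' b) ∈ (((f b).range : Subgroup (H' b)) : Set (H' b)) := ⟨1, map_one _⟩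
    have h1 : ((⟨f b h, m1⟩, ⟨c, hc⟩) :
          (((f b).range : Subgroup (H' b)) : Set (H' b)) × d.set b) = (⟨1, m0⟩, ⟨a, ha⟩) := by
      apply ((d.compl b).existsUnique a).unique
      · show (f b h : H' b) * c = a
        rw [hac, inv_mul_cancel_right]
      · show (1 : H' b) * a = a
        rw [one_mul]
    have hca : (c : H' b) = a := congrArg Subtype.val (Prod.ext_iff.1 h1).2
    rw [hca]
  choose T hTc hTs using hT
  let d' : Transversal (fun b => ((H' b).subtype).comp (f b)) :=
    { injective := fun b => Subtype.coe_injective.comp (hf b)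
      set := T
      one_mem := fun b => hTs b ⟨1, d.one_mem b, rfl⟩
      compl := hTc }
  intro x y hxy
  have key : ∀ z : Monoid.PushoutI f, ∃ w : NormalWord d, w.prod = z := fun z =>
    ⟨z • NormalWord.empty, by rw [NormalWord.prod_smul, NormalWord.prod_empty, mul_one]⟩
  obtain ⟨wx, hwx⟩ := key x
  obtain ⟨wy, hwy⟩ := key y
  have heq : (mapW d d' hTs wx).prod = (mapW d d' hTs wy).prod := by
    rw [mapW_prod, mapW_prod, hwx, hwy]; exact hxy
  have := mapW_injective d d' hTs (NormalWord.prod_injective heq)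
  rw [← hwx, ← hwy, this]
end

section
/- Let G = ⟨v₁, v₂, w₁, w₂ | w₁v₁w₁⁻¹v₁, w₂v₂w₂⁻¹v₂, v₁v₂⁻¹, w₁²v₁^{k₁}(w₂²v₂^{k₂})⁻¹⟩ for fixed integers k₁, k₂. Then the quotient G/⟨⟨v₂², w₂²⟩⟩ is isomorphic to ⟨v₂, w₁, w₂ | [w₁, v₂], [w₂, v₂], w₁²v₂^{k₁+k₂}, w₂², v₂²⟩. -/
/-- Relators for G = ⟨v₁, v₂, w₁, w₂ | w₁v₁w₁⁻¹v₁, w₂v₂w₂⁻¹v₂, v₁v₂⁻¹,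
w₁²v₁^{k₁}(w₂²v₂^{k₂})⁻¹⟩, with generators 0 ↦ v₁, 1 ↦ v₂, 2 ↦ w₁, 3 ↦ w₂. -/
def fourGenRels (k₁ k₂ : ℤ) : Set (FreeGroup (Fin 4)) :=
  {FreeGroup.of 2 * FreeGroup.of 0 * (FreeGroup.of 2)⁻¹ * FreeGroup.of 0,
   FreeGroup.of 3 * FreeGroup.of 1 * (FreeGroup.of 3)⁻¹ * FreeGroup.of 1,
   FreeGroup.of 0 * (FreeGroup.of 1)⁻¹,
   (FreeGroup.of 2) ^ 2 * (FreeGroup.of 0) ^ k₁ *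
     ((FreeGroup.of 3) ^ 2 * (FreeGroup.of 1) ^ k₂)⁻¹}

open scoped commutatorElement

/-- Relators for ⟨v₂, w₁, w₂ | [w₁,v₂], [w₂,v₂], w₁²v₂^{k₁+k₂}, w₂², v₂²⟩,
with generators 0 ↦ v₂, 1 ↦ w₁, 2 ↦ w₂. -/
def threeGenRels (k₁ k₂ : ℤ) : Set (FreeGroup (Fin 3)) :=
  {⁅FreeGroup.of (1 : Fin 3), FreeGroup.of 0⁆,
   ⁅FreeGroup.of (2 : Fin 3), FreeGroup.of 0⁆,
   (FreeGroup.of 1) ^ 2 * (FreeGroup.of 0) ^ (k₁ + k₂),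
   (FreeGroup.of 2) ^ 2,
   (FreeGroup.of 0) ^ 2}

lemma rel_one {α : Type*} {rels : Set (FreeGroup α)} {r : FreeGroup α} (h : r ∈ rels) :
    PresentedGroup.mk rels r = 1 :=
  (QuotientGroup.eq_one_iff r).2 (Subgroup.subset_normalClosure h)

section facts
variable (k₁ k₂ : ℤ)

-- facts in the three-generator group
lemma T_comm_ba : Commute (PresentedGroup.of 1 : PresentedGroup (threeGenRels k₁ k₂))
    (PresentedGroup.of 0) := by
  have h := rel_one (rels := threeGenRels k₁ k₂)
    (r := ⁅FreeGroup.of (1 : Fin 3), FreeGroup.of 0⁆) (Set.mem_insert _ _)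
  rw [map_commutatorElement] at h
  exact commutatorElement_eq_one_iff_commute.1 h

lemma T_comm_ca : Commute (PresentedGroup.of 2 : PresentedGroup (threeGenRels k₁ k₂))
    (PresentedGroup.of 0) := by
  have h := rel_one (rels := threeGenRels k₁ k₂)
    (r := ⁅FreeGroup.of (2 : Fin 3), FreeGroup.of 0⁆) (Set.mem_insert_of_mem _ (Set.mem_insert _ _))
  rw [map_commutatorElement] at h
  exact commutatorElement_eq_one_iff_commute.1 h

lemma T_rel3 : (PresentedGroup.of 1 : PresentedGroup (threeGenRels k₁ k₂)) ^ 2 *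
    (PresentedGroup.of 0) ^ (k₁ + k₂) = 1 := by
  have h := rel_one (rels := threeGenRels k₁ k₂)
    (r := (FreeGroup.of 1) ^ 2 * (FreeGroup.of 0) ^ (k₁ + k₂)) (Set.mem_insert_of_mem _ (Set.mem_insert_of_mem _ (Set.mem_insert _ _)))
  rwa [map_mul, map_pow, map_zpow] at h

lemma T_c2 : (PresentedGroup.of 2 : PresentedGroup (threeGenRels k₁ k₂)) ^ 2 = 1 := by
  have h := rel_one (rels := threeGenRels k₁ k₂)
    (r := (FreeGroup.of 2) ^ 2) (Set.mem_insert_of_mem _ (Set.mem_insert_of_mem _ (Set.mem_insert_of_mem _ (Set.mem_insert _ _))))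
  rwa [map_pow] at h

lemma T_a2 : (PresentedGroup.of 0 : PresentedGroup (threeGenRels k₁ k₂)) ^ 2 = 1 := by
  have h := rel_one (rels := threeGenRels k₁ k₂)
    (r := (FreeGroup.of 0) ^ 2) (Set.mem_insert_of_mem _ (Set.mem_insert_of_mem _ (Set.mem_insert_of_mem _ (Set.mem_insert_of_mem _ (Set.mem_singleton _)))))
  rwa [map_pow] at h

end facts

section homs
variable (k₁ k₂ : ℤ)

/-- Map to the three-generator group: v₁,v₂ ↦ a, w₁ ↦ b, w₂ ↦ c. -/
lemma forward_rels : ∀ r ∈ fourGenRels k₁ k₂,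
    FreeGroup.lift (![PresentedGroup.of 0, PresentedGroup.of 0, PresentedGroup.of 1,
      PresentedGroup.of 2] : Fin 4 → PresentedGroup (threeGenRels k₁ k₂)) r = 1 := by
  set a : PresentedGroup (threeGenRels k₁ k₂) := PresentedGroup.of 0
  set b : PresentedGroup (threeGenRels k₁ k₂) := PresentedGroup.of 1
  set c : PresentedGroup (threeGenRels k₁ k₂) := PresentedGroup.of 2
  have ha2 : a ^ 2 = 1 := T_a2 k₁ k₂
  have ha2' : a ^ (2 : ℤ) = 1 := by
    rw [show (2:ℤ) = ((2:ℕ):ℤ) from rfl, zpow_natCast, ha2]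
  intro r hr
  rcases hr with rfl | rfl | rfl | rfl
  · simp only [map_mul, map_inv, FreeGroup.lift_apply_of, Matrix.cons_val_zero, Matrix.cons_val_one,
      Matrix.head_cons, Matrix.cons_val_two, Matrix.tail_cons]
    have h : b * a * b⁻¹ = a := by rw [(T_comm_ba k₁ k₂).eq]; exact mul_inv_cancel_right _ _
    rw [h, ← sq, ha2]
  · simp only [map_mul, map_inv, FreeGroup.lift_apply_of, Matrix.cons_val_three, Matrix.cons_val_one,
      Matrix.head_cons, Matrix.tail_cons, Matrix.cons_val_zero]
    have h : c * a * c⁻¹ = a := by rw [(T_comm_ca k₁ k₂).eq]; exact mul_inv_cancel_right _ _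
    rw [h, ← sq, ha2]
  · simp only [map_mul, map_inv, FreeGroup.lift_apply_of, Matrix.cons_val_zero, Matrix.cons_val_one,
      Matrix.head_cons]
    group
  · simp only [map_mul, map_inv, map_pow, map_zpow, FreeGroup.lift_apply_of, Matrix.cons_val_zero,
      Matrix.cons_val_one, Matrix.head_cons, Matrix.cons_val_two, Matrix.tail_cons,
      Matrix.cons_val_three]
    have hb2 : b ^ 2 = (a ^ (k₁ + k₂))⁻¹ := eq_inv_of_mul_eq_one_left (T_rel3 k₁ k₂)
    rw [T_c2 k₁ k₂, one_mul, hb2, ← zpow_neg, ← zpow_neg, ← zpow_add, ← zpow_add,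
      show -(k₁ + k₂) + k₁ + -k₂ = 2 * (-k₂) by ring, zpow_mul, ha2', one_zpow]

end homs

section main
variable (k₁ k₂ : ℤ)

/-- The subgroup we quotient by. -/
def N4 (k₁ k₂ : ℤ) : Subgroup (PresentedGroup (fourGenRels k₁ k₂)) :=
  Subgroup.normalClosure
    {((PresentedGroup.of 1 : PresentedGroup (fourGenRels k₁ k₂)) ^ 2),
     ((PresentedGroup.of 3 : PresentedGroup (fourGenRels k₁ k₂)) ^ 2)}

instance : (N4 k₁ k₂).Normal := Subgroup.normalClosure_normal

-- relations in the four-generator presented group P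
lemma P_rel1 : (PresentedGroup.of 2 : PresentedGroup (fourGenRels k₁ k₂)) * PresentedGroup.of 0 *
    (PresentedGroup.of 2)⁻¹ * PresentedGroup.of 0 = 1 := by
  have h := rel_one (rels := fourGenRels k₁ k₂)
    (r := FreeGroup.of 2 * FreeGroup.of 0 * (FreeGroup.of 2)⁻¹ * FreeGroup.of 0) (Set.mem_insert _ _)
  rwa [map_mul, map_mul, map_mul, map_inv] at h

lemma P_rel2 : (PresentedGroup.of 3 : PresentedGroup (fourGenRels k₁ k₂)) * PresentedGroup.of 1 *
    (PresentedGroup.of 3)⁻¹ * PresentedGroup.of 1 = 1 := by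
  have h := rel_one (rels := fourGenRels k₁ k₂)
    (r := FreeGroup.of 3 * FreeGroup.of 1 * (FreeGroup.of 3)⁻¹ * FreeGroup.of 1)
    (Set.mem_insert_of_mem _ (Set.mem_insert _ _))
  rwa [map_mul, map_mul, map_mul, map_inv] at h

lemma P_rel3 : (PresentedGroup.of 0 : PresentedGroup (fourGenRels k₁ k₂)) = PresentedGroup.of 1 := by
  have h := rel_one (rels := fourGenRels k₁ k₂)
    (r := FreeGroup.of 0 * (FreeGroup.of 1)⁻¹) (Set.mem_insert_of_mem _ (Set.mem_insert_of_mem _ (Set.mem_insert _ _)))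
  rw [map_mul, map_inv] at h
  exact mul_inv_eq_one.1 h

lemma P_rel4 : (PresentedGroup.of 2 : PresentedGroup (fourGenRels k₁ k₂)) ^ 2 *
    (PresentedGroup.of 0) ^ k₁ = (PresentedGroup.of 3) ^ 2 * (PresentedGroup.of 1) ^ k₂ := by
  have h := rel_one (rels := fourGenRels k₁ k₂)
    (r := (FreeGroup.of 2) ^ 2 * (FreeGroup.of 0) ^ k₁ *
      ((FreeGroup.of 3) ^ 2 * (FreeGroup.of 1) ^ k₂)⁻¹) (Set.mem_insert_of_mem _ (Set.mem_insert_of_mem _ (Set.mem_insert_of_mem _ (Set.mem_singleton _))))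
  rw [map_mul, map_inv, map_mul, map_mul, map_pow, map_pow, map_zpow, map_zpow] at h
  exact mul_inv_eq_one.1 h

/-- Quotient map. -/
def qm (k₁ k₂ : ℤ) : PresentedGroup (fourGenRels k₁ k₂) →*
    PresentedGroup (fourGenRels k₁ k₂) ⧸ N4 k₁ k₂ := QuotientGroup.mk' (N4 k₁ k₂)

lemma Q_v2 : (qm k₁ k₂ (PresentedGroup.of 1)) ^ 2 = 1 := by
  rw [← map_pow]
  exact (QuotientGroup.eq_one_iff _).2 (Subgroup.subset_normalClosure (Set.mem_insert _ _))

lemma Q_w2 : (qm k₁ k₂ (PresentedGroup.of 3)) ^ 2 = 1 := by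
  rw [← map_pow]
  exact (QuotientGroup.eq_one_iff _).2 (Subgroup.subset_normalClosure (Set.mem_insert_of_mem _ (Set.mem_singleton _)))

lemma backward_rels : ∀ r ∈ threeGenRels k₁ k₂,
    FreeGroup.lift (![qm k₁ k₂ (PresentedGroup.of 1), qm k₁ k₂ (PresentedGroup.of 2),
      qm k₁ k₂ (PresentedGroup.of 3)] :
      Fin 3 → PresentedGroup (fourGenRels k₁ k₂) ⧸ N4 k₁ k₂) r = 1 := by
  set q := qm k₁ k₂
  set V := q (PresentedGroup.of 1) with hV
  set W₁ := q (PresentedGroup.of 2) with hW₁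
  set W₂ := q (PresentedGroup.of 3) with hW₂
  have hv2 : V ^ 2 = 1 := Q_v2 k₁ k₂
  have hw2 : W₂ ^ 2 = 1 := Q_w2 k₁ k₂
  have hv2' : V ^ (2 : ℤ) = 1 := by
    rw [show (2:ℤ) = ((2:ℕ):ℤ) from rfl, zpow_natCast, hv2]
  intro r hr
  rcases hr with rfl | rfl | rfl | rfl | rfl
  · rw [map_commutatorElement]
    simp only [FreeGroup.lift_apply_of, Matrix.cons_val_one, Matrix.head_cons, Matrix.cons_val_zero]
    have key : (PresentedGroup.of 2 : PresentedGroup (fourGenRels k₁ k₂)) * PresentedGroup.of 1 *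
        (PresentedGroup.of 2)⁻¹ = (PresentedGroup.of 1)⁻¹ := by
      have h := P_rel1 k₁ k₂
      rw [P_rel3 k₁ k₂] at h
      exact eq_inv_of_mul_eq_one_left h
    have keyP : ⁅(PresentedGroup.of 2 : PresentedGroup (fourGenRels k₁ k₂)),
        PresentedGroup.of 1⁆ =
        (((PresentedGroup.of 1 : PresentedGroup (fourGenRels k₁ k₂))) ^ 2)⁻¹ := by
      rw [commutatorElement_def, key, ← mul_inv_rev, ← sq]
    rw [← map_commutatorElement, keyP, map_inv, map_pow]
    rw [← hV, hv2, inv_one]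
  · rw [map_commutatorElement]
    simp only [FreeGroup.lift_apply_of, Matrix.cons_val_two, Matrix.tail_cons, Matrix.head_cons,
      Matrix.cons_val_zero]
    have key : (PresentedGroup.of 3 : PresentedGroup (fourGenRels k₁ k₂)) * PresentedGroup.of 1 *
        (PresentedGroup.of 3)⁻¹ = (PresentedGroup.of 1)⁻¹ :=
      eq_inv_of_mul_eq_one_left (P_rel2 k₁ k₂)
    have keyP : ⁅(PresentedGroup.of 3 : PresentedGroup (fourGenRels k₁ k₂)),
        PresentedGroup.of 1⁆ =
        (((PresentedGroup.of 1 : PresentedGroup (fourGenRels k₁ k₂))) ^ 2)⁻¹ := by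
      rw [commutatorElement_def, key, ← mul_inv_rev, ← sq]
    rw [← map_commutatorElement, keyP, map_inv, map_pow]
    rw [← hV, hv2, inv_one]
  · simp only [map_mul, map_pow, map_zpow, FreeGroup.lift_apply_of, Matrix.cons_val_one,
      Matrix.head_cons, Matrix.cons_val_zero]
    have hr4' : (PresentedGroup.of 2 : PresentedGroup (fourGenRels k₁ k₂)) ^ 2 *
        (PresentedGroup.of 1) ^ k₁ = (PresentedGroup.of 3) ^ 2 * (PresentedGroup.of 1) ^ k₂ := by
      have h := P_rel4 k₁ k₂
      rwa [P_rel3 k₁ k₂] at h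
    have h4 := congrArg q hr4'
    rw [map_mul, map_mul, map_pow, map_pow, map_zpow, map_zpow, ← hV, ← hW₁, ← hW₂, hw2,
      one_mul] at h4
    rw [eq_mul_inv_of_mul_eq h4, ← zpow_neg, ← zpow_add, ← zpow_add,
      show k₂ + -k₁ + (k₁ + k₂) = 2 * k₂ by ring, zpow_mul, hv2', one_zpow]
  · simp only [map_pow, FreeGroup.lift_apply_of, Matrix.cons_val_two, Matrix.tail_cons, Matrix.head_cons]
    exact hw2
  · simp only [map_pow, FreeGroup.lift_apply_of, Matrix.cons_val_zero]
    exact hv2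

end main

section equiv
variable (k₁ k₂ : ℤ)

def phi0 (k₁ k₂ : ℤ) : PresentedGroup (fourGenRels k₁ k₂) →* PresentedGroup (threeGenRels k₁ k₂) :=
  PresentedGroup.toGroup (forward_rels k₁ k₂)

lemma N4_le_ker : N4 k₁ k₂ ≤ (phi0 k₁ k₂).ker := by
  apply Subgroup.normalClosure_le_normal
  rintro x (rfl | rfl) <;>
    simp [MonoidHom.mem_ker, phi0, map_pow, PresentedGroup.toGroup.of, T_a2, T_c2]

def phi (k₁ k₂ : ℤ) : (PresentedGroup (fourGenRels k₁ k₂) ⧸ N4 k₁ k₂) →*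
    PresentedGroup (threeGenRels k₁ k₂) :=
  QuotientGroup.lift (N4 k₁ k₂) (phi0 k₁ k₂) fun _ hx => N4_le_ker k₁ k₂ hx

def psi (k₁ k₂ : ℤ) : PresentedGroup (threeGenRels k₁ k₂) →*
    (PresentedGroup (fourGenRels k₁ k₂) ⧸ N4 k₁ k₂) :=
  PresentedGroup.toGroup (backward_rels k₁ k₂)

lemma phi_mk (x : Fin 4) : phi k₁ k₂ (qm k₁ k₂ (PresentedGroup.of x)) =
    ![PresentedGroup.of 0, PresentedGroup.of 0, PresentedGroup.of 1, PresentedGroup.of 2] x := by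
  simp [phi, qm, phi0, PresentedGroup.toGroup.of]

lemma psi_of (x : Fin 3) : psi k₁ k₂ (PresentedGroup.of x) =
    ![qm k₁ k₂ (PresentedGroup.of 1), qm k₁ k₂ (PresentedGroup.of 2),
      qm k₁ k₂ (PresentedGroup.of 3)] x := by
  simp [psi, PresentedGroup.toGroup.of]

lemma comp1 : (psi k₁ k₂).comp (phi k₁ k₂) = MonoidHom.id _ := by
  apply QuotientGroup.monoidHom_ext
  apply PresentedGroup.ext
  intro x
  show psi k₁ k₂ (phi k₁ k₂ (qm k₁ k₂ (PresentedGroup.of x))) = qm k₁ k₂ (PresentedGroup.of x)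
  fin_cases x <;> simp [phi_mk, psi_of, P_rel3]

lemma comp2 : (phi k₁ k₂).comp (psi k₁ k₂) = MonoidHom.id _ := by
  apply PresentedGroup.ext
  intro x
  show phi k₁ k₂ (psi k₁ k₂ (PresentedGroup.of x)) = PresentedGroup.of x
  fin_cases x <;> simp [phi_mk, psi_of]

end equiv


/-- G/⟨⟨v₂², w₂²⟩⟩ is isomorphic to ⟨v₂, w₁, w₂ | [w₁,v₂], [w₂,v₂], w₁²v₂^{k₁+k₂}, w₂², v₂²⟩,
matching generators v₂ ↦ v₂, w₁ ↦ w₁, w₂ ↦ w₂. -/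
theorem klein_boundary_quotient (k₁ k₂ : ℤ) :
    ∃ e : (PresentedGroup (fourGenRels k₁ k₂) ⧸
        Subgroup.normalClosure
          {((PresentedGroup.of 1 : PresentedGroup (fourGenRels k₁ k₂)) ^ 2),
           ((PresentedGroup.of 3 : PresentedGroup (fourGenRels k₁ k₂)) ^ 2)}) ≃*
        PresentedGroup (threeGenRels k₁ k₂),
      e (QuotientGroup.mk (PresentedGroup.of 1)) = PresentedGroup.of 0 ∧
      e (QuotientGroup.mk (PresentedGroup.of 2)) = PresentedGroup.of 1 ∧
      e (QuotientGroup.mk (PresentedGroup.of 3)) = PresentedGroup.of 2 := by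
  refine ⟨MonoidHom.toMulEquiv (phi k₁ k₂) (psi k₁ k₂) (comp1 k₁ k₂) (comp2 k₁ k₂), ?_, ?_, ?_⟩
  · show phi k₁ k₂ (qm k₁ k₂ (PresentedGroup.of 1)) = PresentedGroup.of 0
    simp [phi_mk]
  · show phi k₁ k₂ (qm k₁ k₂ (PresentedGroup.of 2)) = PresentedGroup.of 1
    simp [phi_mk]
  · show phi k₁ k₂ (qm k₁ k₂ (PresentedGroup.of 3)) = PresentedGroup.of 2
    simp [phi_mk]
end
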